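/- Let p = (d_k, ..., d_0) be an (n,b)-palintiple that is either a 1089 palintiple (symmetric with n+1 dividing b) or shifted-symmetric. Let p̂₁ be a (k+2)-digit (n̂₁, b̂₁)-palintiple and p̂₂ a (k+2)-digit (n̂₂, b̂₂)-palintiple, both singly-derived from p, i.e., the carries of each satisfy ĉ_0 = 0 and ĉ_j = d_{j−1} for 1 ≤ j ≤ k+1. Then their palinomials differ by only a linear factor: in ℤ[X], (X − b̂₂)·Pal̂₁(X) = (X − b̂₁)·Pal̂₂(X), where Pal̂₁ and Pal̂₂ are the palinomials of p̂₁ and p̂₂. -/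

import Mathlib

open Finset Polynomial

/-- `d 0, ..., d k` are the `k+1` digits (least significant first) of an
`(n,b)`-palintiple. -/
def IsPalintiple (n b : ℤ) (k : ℕ) (d : ℕ → ℤ) : Prop :=
  1 < n ∧ n < b ∧ 1 ≤ k ∧
  (∀ j ≤ k, 0 ≤ d j ∧ d j ≤ b - 1) ∧ d k ≠ 0 ∧ d 0 ≠ 0 ∧
  (∑ j ∈ range (k + 1), d j * b ^ j) = n * ∑ j ∈ range (k + 1), d (k - j) * b ^ j

/-- `c 0, ..., c (k+1)` are the carries of the `(n,b)`-palintiple with digits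
`d 0, ..., d k`. -/
def IsCarries (n b : ℤ) (k : ℕ) (d c : ℕ → ℤ) : Prop :=
  c 0 = 0 ∧ ∀ j ≤ k, n * d (k - j) + c j = d j + b * c (j + 1)

/-- A palintiple with carries `c` is symmetric if `c j = c (k-j)`. -/
def IsSym (k : ℕ) (c : ℕ → ℤ) : Prop := ∀ j ≤ k, c j = c (k - j)

/-- A palintiple with carries `c` is shifted-symmetric if `c j = c (k-j+1)`. -/
def IsShiftedSym (k : ℕ) (c : ℕ → ℤ) : Prop := ∀ j ≤ k, c j = c (k - j + 1)

/-- A palintiple is asymmetric if it is neither symmetric nor shifted-symmetric. -/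
def IsAsym (k : ℕ) (c : ℕ → ℤ) : Prop := ¬ IsSym k c ∧ ¬ IsShiftedSym k c

/-- The palinomial of the `(n,b)`-palintiple with digits `d 0, ..., d k`. -/
noncomputable def palinomial (n : ℤ) (k : ℕ) (d : ℕ → ℤ) : Polynomial ℤ :=
  ∑ j ∈ Finset.range (k + 1), Polynomial.C (d j - n * d (k - j)) * Polynomial.X ^ j

/-- The digit polynomial of the palintiple with digits `d 0, ..., d k`. -/
noncomputable def digitPoly (k : ℕ) (d : ℕ → ℤ) : Polynomial ℤ :=
  ∑ j ∈ Finset.range (k + 1), Polynomial.C (d j) * Polynomial.X ^ j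

/-- The reverse-digit polynomial of the palintiple with digits `d 0, ..., d k`. -/
noncomputable def revDigitPoly (k : ℕ) (d : ℕ → ℤ) : Polynomial ℤ :=
  ∑ j ∈ Finset.range (k + 1), Polynomial.C (d (k - j)) * Polynomial.X ^ j

lemma carries_top_zero (n b : ℤ) (k : ℕ) (d c : ℕ → ℤ)
    (hp : IsPalintiple n b k d) (hc : IsCarries n b k d c) : c (k + 1) = 0 := by
  obtain ⟨hn, hnb, -, -, -, -, hsum⟩ := hp
  obtain ⟨hc0, hrec⟩ := hc
  have key : ∑ j ∈ range (k + 1), (n * d (k - j) + c j) * b ^ j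
      = ∑ j ∈ range (k + 1), (d j + b * c (j + 1)) * b ^ j := by
    apply Finset.sum_congr rfl
    intro j hj
    rw [hrec j (Nat.lt_succ_iff.mp (Finset.mem_range.mp hj))]
  have e1 : ∑ j ∈ range (k + 1), (n * d (k - j) + c j) * b ^ j
      = n * (∑ j ∈ range (k + 1), d (k - j) * b ^ j)
        + ∑ j ∈ range (k + 1), c j * b ^ j := by
    rw [Finset.mul_sum, ← Finset.sum_add_distrib]
    exact Finset.sum_congr rfl fun j _ => by ring
  have e2 : ∑ j ∈ range (k + 1), (d j + b * c (j + 1)) * b ^ j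
      = (∑ j ∈ range (k + 1), d j * b ^ j)
        + ∑ j ∈ range (k + 1), c (j + 1) * b ^ (j + 1) := by
    rw [← Finset.sum_add_distrib]
    exact Finset.sum_congr rfl fun j _ => by ring
  rw [e1, e2] at key
  have h1 : ∑ j ∈ range (k + 1), c j * b ^ j
      = ∑ j ∈ range (k + 1), c (j + 1) * b ^ (j + 1) := by linarith [hsum]
  have h2 := Finset.sum_range_succ' (fun j => c j * b ^ j) k
  have h3 := Finset.sum_range_succ (fun j => c (j + 1) * b ^ (j + 1)) k
  simp only [pow_zero, mul_one] at h2 h3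
  have hfin : c 0 = c (k + 1) * b ^ (k + 1) := by
    rw [h2, h3] at h1; linarith
  rw [hc0] at hfin
  have hb : b ^ (k + 1) ≠ 0 := pow_ne_zero _ (by linarith)
  rcases mul_eq_zero.mp hfin.symm with h | h
  · exact h
  · exact absurd h hb

lemma derived_palinomial (k : ℕ) (d : ℕ → ℤ) (nh bh : ℤ) (dh ch : ℕ → ℤ)
    (hp : IsPalintiple nh bh (k + 1) dh) (hc : IsCarries nh bh (k + 1) dh ch)
    (hder : ch 0 = 0 ∧ ∀ j, 1 ≤ j → j ≤ k + 1 → ch j = d (j - 1)) :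
    palinomial nh (k + 1) dh = (X - C bh) * digitPoly k d := by
  have htop : ch (k + 2) = 0 := carries_top_zero nh bh (k + 1) dh ch hp hc
  obtain ⟨hc0, hrec⟩ := hc
  obtain ⟨-, hd⟩ := hder
  have step : palinomial nh (k + 1) dh
      = ∑ j ∈ range (k + 2), (C (ch j) - C bh * C (ch (j + 1))) * X ^ j := by
    unfold palinomial
    apply Finset.sum_congr rfl
    intro j hj
    have hj' : j ≤ k + 1 := Nat.lt_succ_iff.mp (Finset.mem_range.mp hj)
    have h := hrec j hj'
    rw [show dh j - nh * dh (k + 1 - j) = ch j - bh * ch (j + 1) from by linarith,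
      map_sub, map_mul]
  have hshift : ∑ j ∈ range (k + 2), C (ch (j + 1)) * X ^ j = digitPoly k d := by
    rw [Finset.sum_range_succ]
    rw [show ch (k + 1 + 1) = 0 from htop]
    simp only [map_zero, zero_mul, add_zero]
    unfold digitPoly
    apply Finset.sum_congr rfl
    intro j hj
    have hj' : j ≤ k := Nat.lt_succ_iff.mp (Finset.mem_range.mp hj)
    rw [hd (j + 1) (by omega) (by omega)]
    simp
  have hlow : ∑ j ∈ range (k + 2), C (ch j) * X ^ j = X * digitPoly k d := by
    rw [Finset.sum_range_succ']
    rw [hc0]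
    simp only [map_zero, zero_mul, pow_zero, add_zero, mul_one]
    unfold digitPoly
    rw [Finset.mul_sum]
    apply Finset.sum_congr rfl
    intro j hj
    have hj' : j ≤ k := Nat.lt_succ_iff.mp (Finset.mem_range.mp hj)
    rw [hd (j + 1) (by omega) (by omega)]
    simp only [Nat.add_sub_cancel]
    ring
  have expand : ∑ j ∈ range (k + 2), (C (ch j) - C bh * C (ch (j + 1))) * X ^ j
      = (∑ j ∈ range (k + 2), C (ch j) * X ^ j)
        - C bh * ∑ j ∈ range (k + 2), C (ch (j + 1)) * X ^ j := by
    rw [Finset.mul_sum, ← Finset.sum_sub_distrib]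
    exact Finset.sum_congr rfl fun j _ => by ring
  rw [step, expand, hshift, hlow]
  ring

/-- **Corollary.** Palinomials induced by any two singly-derived palintiples
constructed from a common 1089 or shifted-symmetric palintiple differ by only a
linear factor. -/
theorem singly_derived_palinomials_linear_factor (n b : ℤ) (k : ℕ) (d c : ℕ → ℤ)
    (hp : IsPalintiple n b k d) (hc : IsCarries n b k d c)
    (hclass : (IsSym k c ∧ n + 1 ∣ b) ∨ IsShiftedSym k c)
    (nh1 bh1 : ℤ) (dh1 ch1 : ℕ → ℤ)
    (hp1 : IsPalintiple nh1 bh1 (k + 1) dh1) (hc1 : IsCarries nh1 bh1 (k + 1) dh1 ch1)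
    (hder1 : ch1 0 = 0 ∧ ∀ j, 1 ≤ j → j ≤ k + 1 → ch1 j = d (j - 1))
    (nh2 bh2 : ℤ) (dh2 ch2 : ℕ → ℤ)
    (hp2 : IsPalintiple nh2 bh2 (k + 1) dh2) (hc2 : IsCarries nh2 bh2 (k + 1) dh2 ch2)
    (hder2 : ch2 0 = 0 ∧ ∀ j, 1 ≤ j → j ≤ k + 1 → ch2 j = d (j - 1)) :
    (X - C bh2) * palinomial nh1 (k + 1) dh1 =
      (X - C bh1) * palinomial nh2 (k + 1) dh2 := by
  rw [derived_palinomial k d nh1 bh1 dh1 ch1 hp1 hc1 hder1,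
    derived_palinomial k d nh2 bh2 dh2 ch2 hp2 hc2 hder2]
  ring
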